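/- Let Φ be a complete fan and σ a maximal cone of the singular subfan Φˢ (the minimal subfan containing all deficient cones). Then every cone τ ∈ St(σ) has the form τ = σ + ρ₁ + ... + ρ_s with s = dim(τ) − dim(σ), where each ρᵢ is a free edge of τ. -/
import Mathlib


open Set

variable {V : Type} [AddCommGroup V] [Module ℝ V]

/-- A polyhedral cone: a finite intersection of closed halfspaces `{L ≥ 0}`. -/
def IsPolyCone (σ : Set V) : Prop :=
  ∃ S : Finset (V →ₗ[ℝ] ℝ), σ = {v | ∀ L ∈ S, 0 ≤ L v}

/-- `τ` is a face of the cone `σ`. -/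
def IsFaceOf (τ σ : Set V) : Prop :=
  ∃ L : V →ₗ[ℝ] ℝ, (∀ v ∈ σ, 0 ≤ L v) ∧ τ = {v ∈ σ | L v = 0}

/-- The dimension of a cone: the dimension of its linear span. -/
noncomputable def coneDim (σ : Set V) : ℕ :=
  Module.finrank ℝ (Submodule.span ℝ σ)

/-- A fan: a finite collection of polyhedral cones, closed under taking faces, such
that the intersection of two cones is a face of each, containing the zero cone. -/
structure Fan (V : Type) [AddCommGroup V] [Module ℝ V] where
  cones : Finset (Set V)
  poly : ∀ σ ∈ cones, IsPolyCone σ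
  face_mem : ∀ σ ∈ cones, ∀ τ : Set V, IsFaceOf τ σ → τ ∈ cones
  inter_face : ∀ σ ∈ cones, ∀ τ ∈ cones, IsFaceOf (σ ∩ τ) σ
  zero_mem : ({0} : Set V) ∈ cones

/-- The support of a fan. -/
def Fan.support (Φ : Fan V) : Set V := ⋃ σ ∈ Φ.cones, σ

/-- A fan is complete if its support is all of `V`. -/
def Fan.IsComplete (Φ : Fan V) : Prop := Φ.support = univ

/-- A cone is simplicial if it is the convex hull of `coneDim σ` many rays spanned
by linearly independent vectors. -/
def IsSimplicialCone (σ : Set V) : Prop :=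
  ∃ f : Fin (coneDim σ) → V, LinearIndependent ℝ f ∧
    σ = {v | ∃ c : Fin (coneDim σ) → ℝ, (∀ i, 0 ≤ c i) ∧ v = ∑ i, c i • f i}

def Fan.IsSimplicial (Φ : Fan V) : Prop := ∀ σ ∈ Φ.cones, IsSimplicialCone σ

/-- An edge of a cone: a 1-dimensional face. -/
def IsEdge (ρ σ : Set V) : Prop := IsFaceOf ρ σ ∧ coneDim ρ = 1

/-- Minkowski sum of two subsets. -/
def setAdd (σ τ : Set V) : Set V := {x | ∃ a ∈ σ, ∃ b ∈ τ, x = a + b}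

/-- An edge `ρ` of `σ` is free if all other edges of `σ` are contained in one facet
`τ`, and `σ = τ + ρ`. -/
def IsFreeEdge (ρ σ : Set V) : Prop :=
  IsEdge ρ σ ∧ ∃ τ : Set V, IsFaceOf τ σ ∧ coneDim τ = coneDim σ - 1 ∧
    (∀ ρ' : Set V, IsEdge ρ' σ → ρ' ≠ ρ → ρ' ⊆ τ) ∧ σ = setAdd τ ρ

/-- A cone is deficient if it has no free edge. -/
def IsDeficient (σ : Set V) : Prop := ¬ ∃ ρ : Set V, IsFreeEdge ρ σ

/-- The singular subfan `Φˢ`: the (cones of the) minimal subfan of `Φ` containing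
all deficient cones of `Φ`. -/
def Fan.singular (Φ : Fan V) : Set (Set V) :=
  {σ | σ ∈ Φ.cones ∧ ∃ τ ∈ Φ.cones, IsDeficient τ ∧ IsFaceOf σ τ}

/-- The star of a cone `σ` in the fan `Φ`. -/
def Fan.star (Φ : Fan V) (σ : Set V) : Set (Set V) := {τ | τ ∈ Φ.cones ∧ σ ⊆ τ}

/-- `[St(σ)]`: the minimal subfan containing the star of `σ`. -/
def Fan.closedStar (Φ : Fan V) (σ : Set V) : Set (Set V) :=
  {ξ | ∃ τ ∈ Φ.star σ, IsFaceOf ξ τ}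

/-- `∂St(σ)`. -/
def Fan.boundaryStar (Φ : Fan V) (σ : Set V) : Set (Set V) :=
  Φ.closedStar σ \ Φ.star σ

/-- The link of a cone. -/
def Fan.link (Φ : Fan V) (σ : Set V) : Set (Set V) :=
  {τ | τ ∈ Φ.boundaryStar σ ∧ τ ∩ σ = {0}}

/-- The relative interior `σ⁰` of a cone: the complement of its proper faces. -/
def coneInt (σ : Set V) : Set V :=
  σ \ ⋃ τ ∈ {τ : Set V | IsFaceOf τ σ ∧ τ ≠ σ}, τ

/-- `l` is piecewise linear with respect to `Φ`. -/
def IsPWLinear (Φ : Fan V) (l : V → ℝ) : Prop :=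
  ∀ σ ∈ Φ.cones, ∃ L : V →ₗ[ℝ] ℝ, ∀ v ∈ σ, l v = L v

/-- `l` is strictly convex on the complete fan `Φ`: for any two distinct
top-dimensional cones `σ, τ` the linear function agreeing with `l` on `σ` is
strictly smaller than `l` on the interior of `τ`. -/
def IsStrictlyConvex (Φ : Fan V) (l : V → ℝ) : Prop :=
  IsPWLinear Φ l ∧
  ∀ σ ∈ Φ.cones, coneDim σ = Module.finrank ℝ V →
    ∀ L : V →ₗ[ℝ] ℝ, (∀ v ∈ σ, l v = L v) →
      ∀ τ ∈ Φ.cones, coneDim τ = Module.finrank ℝ V → τ ≠ σ →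
        ∀ v ∈ coneInt τ, L v < l v

/-- auxiliary: a "good cone" is closed under nonneg scaling and addition and contains 0 -/
def GoodCone (σ : Set V) : Prop :=
  (0:V) ∈ σ ∧ (∀ c : ℝ, 0 ≤ c → ∀ x ∈ σ, c • x ∈ σ) ∧ (∀ x ∈ σ, ∀ y ∈ σ, x + y ∈ σ)

lemma goodCone_of_poly {σ : Set V} (h : IsPolyCone σ) : GoodCone σ := by
  obtain ⟨S, rfl⟩ := h
  refine ⟨by simp, fun c hc x hx L hL => ?_, fun x hx y hy L hL => ?_⟩
  · rw [map_smul]; exact mul_nonneg hc (hx L hL)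
  · rw [map_add]; exact add_nonneg (hx L hL) (hy L hL)

lemma face_subset {τ σ : Set V} (h : IsFaceOf τ σ) : τ ⊆ σ := by
  obtain ⟨L, _, rfl⟩ := h; exact fun v hv => hv.1

lemma goodCone_of_face {τ σ : Set V} (hσ : GoodCone σ) (h : IsFaceOf τ σ) : GoodCone τ := by
  obtain ⟨L, hL, rfl⟩ := h
  obtain ⟨h0, hs, ha⟩ := hσ
  refine ⟨⟨h0, by simp⟩, fun c hc x hx => ⟨hs c hc x hx.1, by rw [map_smul, hx.2, smul_zero]⟩,
    fun x hx y hy => ⟨ha x hx.1 y hy.1, by rw [map_add, hx.2, hy.2, add_zero]⟩⟩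

lemma face_refl (σ : Set V) : IsFaceOf σ σ :=
  ⟨0, fun v _ => le_refl 0, by simp⟩

/-- if e is a face of τ and e ⊆ ξ ⊆ τ then e is a face of ξ -/
lemma face_of_face_subset {e ξ τ : Set V} (h : IsFaceOf e τ) (heξ : e ⊆ ξ) (hξτ : ξ ⊆ τ) :
    IsFaceOf e ξ := by
  obtain ⟨L, hL, he⟩ := h
  refine ⟨L, fun v hv => hL v (hξτ hv), ?_⟩
  apply Set.Subset.antisymm
  · intro v hv; exact ⟨heξ hv, (he ▸ hv).2⟩
  · intro v hv; rw [he]; exact ⟨hξτ hv.1, hv.2⟩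

lemma coneDim_mono [FiniteDimensional ℝ V] {σ τ : Set V} (h : σ ⊆ τ) : coneDim σ ≤ coneDim τ :=
  Submodule.finrank_mono (Submodule.span_mono h)

lemma face_eq_of_coneDim_eq [FiniteDimensional ℝ V] {σ τ : Set V} (h : IsFaceOf σ τ)
    (hd : coneDim σ = coneDim τ) : σ = τ := by
  obtain ⟨L, hL, hface⟩ := h
  have hle : Submodule.span ℝ σ ≤ Submodule.span ℝ τ :=
    Submodule.span_mono (by rw [hface]; exact fun v hv => hv.1)
  have hsp : Submodule.span ℝ σ = Submodule.span ℝ τ :=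
    Submodule.eq_of_le_of_finrank_le hle hd.ge
  apply Set.Subset.antisymm (by rw [hface]; exact fun v hv => hv.1)
  intro v hv
  have hv' : v ∈ Submodule.span ℝ σ := hsp ▸ Submodule.subset_span hv
  have hker : Submodule.span ℝ σ ≤ LinearMap.ker L := by
    rw [Submodule.span_le]; intro w hw
    have := (hface ▸ hw :)
    exact this.2
  rw [hface]; exact ⟨hv, hker hv'⟩

lemma zero_mem_face {τ σ : Set V} (hσ : GoodCone σ) (h : IsFaceOf τ σ) : (0:V) ∈ τ :=
  (goodCone_of_face hσ h).1


lemma span_setAdd {σ τ : Set V} (h0σ : (0:V) ∈ σ) (h0τ : (0:V) ∈ τ) :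
    Submodule.span ℝ (setAdd σ τ) = Submodule.span ℝ σ ⊔ Submodule.span ℝ τ := by
  apply le_antisymm
  · rw [Submodule.span_le]
    rintro x ⟨a, ha, b, hb, rfl⟩
    exact Submodule.add_mem _ (Submodule.mem_sup_left (Submodule.subset_span ha))
      (Submodule.mem_sup_right (Submodule.subset_span hb))
  · refine sup_le (Submodule.span_mono fun a ha => ⟨a, ha, 0, h0τ, (add_zero a).symm⟩)
      (Submodule.span_mono fun b hb => ⟨0, h0σ, b, hb, (zero_add b).symm⟩)

lemma exists_dual_of_nmem [FiniteDimensional ℝ V] {W : Submodule ℝ V} {u : V} (h : u ∉ W) :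
    ∃ L : V →ₗ[ℝ] ℝ, (∀ w ∈ W, L w = 0) ∧ L u = 1 := by
  have hu : W.mkQ u ≠ 0 := by
    simpa [Submodule.Quotient.mk_eq_zero] using h
  have := (Module.forall_dual_apply_eq_zero_iff ℝ (W.mkQ u)).not.mpr hu
  push_neg at this
  obtain ⟨φ, hφ⟩ := this
  refine ⟨(φ (W.mkQ u))⁻¹ • (φ.comp W.mkQ), fun w hw => ?_, ?_⟩
  · simp [Submodule.Quotient.mk_eq_zero, (Submodule.Quotient.mk_eq_zero W).mpr hw,
      show W.mkQ w = 0 from (Submodule.Quotient.mk_eq_zero W).mpr hw]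
  · simp only [LinearMap.smul_apply, LinearMap.comp_apply, smul_eq_mul]
    exact inv_mul_cancel₀ hφ

lemma coneDim_eq_one_ray {ρ : Set V} [FiniteDimensional ℝ V] (h : coneDim ρ = 1) :
    ∃ u : V, u ≠ 0 ∧ u ∈ ρ ∧ Submodule.span ℝ ρ = Submodule.span ℝ {u} := by
  have hne : ∃ u ∈ ρ, u ≠ (0:V) := by
    by_contra hc
    push_neg at hc
    have : ρ ⊆ {(0:V)} := fun x hx => hc x hx
    have := Submodule.span_mono (R := ℝ) this
    simp only [Submodule.span_singleton_eq_bot.mpr rfl, le_bot_iff] at this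
    rw [coneDim, this] at h
    simp at h
  obtain ⟨u, hu, hune⟩ := hne
  refine ⟨u, hune, hu, ?_⟩
  symm
  apply Submodule.eq_of_le_of_finrank_le
    (Submodule.span_mono (by simpa using hu))
  rw [show Module.finrank ℝ (Submodule.span ℝ ρ) = 1 from h, finrank_span_singleton hune]

def Ray (u : V) : Set V := {x | ∃ t : ℝ, 0 ≤ t ∧ x = t • u}

lemma ray_good (u : V) : GoodCone (Ray u) := by
  refine ⟨⟨0, le_refl 0, (zero_smul ℝ u).symm⟩, ?_, ?_⟩
  · rintro c hc x ⟨t, ht, rfl⟩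
    exact ⟨c * t, mul_nonneg hc ht, (mul_smul c t u).symm⟩
  · rintro x ⟨t, ht, rfl⟩ y ⟨s, hs, rfl⟩
    exact ⟨t + s, by linarith, (add_smul t s u).symm⟩

lemma span_ray {u : V} : Submodule.span ℝ (Ray u) = Submodule.span ℝ {u} := by
  apply le_antisymm
  · rw [Submodule.span_le]
    rintro x ⟨t, _, rfl⟩
    exact Submodule.smul_mem _ t (Submodule.subset_span rfl)
  · exact Submodule.span_mono (by intro x hx; exact ⟨1, zero_le_one, by rw [one_smul, hx]⟩)

lemma finrank_sup_span_singleton [FiniteDimensional ℝ V] {p : Submodule ℝ V} {u : V}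
    (hu : u ≠ 0) (h : u ∉ p) :
    Module.finrank ℝ (p ⊔ Submodule.span ℝ {u} : Submodule ℝ V) = Module.finrank ℝ p + 1 := by
  have hdisj : p ⊓ Submodule.span ℝ {u} = ⊥ := by
    rw [eq_bot_iff]
    rintro x ⟨hxp, hxu⟩
    obtain ⟨c, rfl⟩ := Submodule.mem_span_singleton.mp hxu
    rcases eq_or_ne c 0 with rfl | hc
    · simp
    · exact absurd (by simpa [smul_smul, inv_mul_cancel₀ hc] using p.smul_mem c⁻¹ hxp) h
  have := Submodule.finrank_sup_add_finrank_inf_eq p (Submodule.span ℝ {u})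
  rw [hdisj] at this
  simp only [finrank_bot, add_zero, finrank_span_singleton hu] at this
  omega

lemma coneDim_setAdd_ray [FiniteDimensional ℝ V] {ξ : Set V} {u : V}
    (h0 : (0:V) ∈ ξ) (hu : u ≠ 0) (hnm : u ∉ Submodule.span ℝ ξ) :
    coneDim (setAdd ξ (Ray u)) = coneDim ξ + 1 := by
  rw [coneDim, span_setAdd h0 (ray_good u).1, span_ray, finrank_sup_span_singleton hu hnm]
  rfl

lemma ray_notMem_span [FiniteDimensional ℝ V] {ξ τ : Set V} {u : V}
    (hτ : τ = setAdd ξ (Ray u)) (h0 : (0:V) ∈ ξ)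
    (hlt : coneDim ξ < coneDim τ) : u ∉ Submodule.span ℝ ξ := by
  intro hmem
  have : Submodule.span ℝ τ = Submodule.span ℝ ξ := by
    rw [hτ, span_setAdd h0 (ray_good u).1, span_ray, sup_eq_left]
    rw [Submodule.span_le]
    rintro x rfl
    exact hmem
  rw [coneDim, coneDim, this] at hlt
  omega


/-- A free edge of a good cone is a ray. -/
lemma freeEdge_ray [FiniteDimensional ℝ V] {ρ τ : Set V} (hτ : GoodCone τ)
    (hfree : IsFreeEdge ρ τ) : ∃ u : V, u ≠ 0 ∧ ρ = Ray u := by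
  obtain ⟨⟨hfaceρ, hdimρ⟩, ξ, hfaceξ, hdimξ, hedges, hsum⟩ := hfree
  obtain ⟨u, hune, huρ, hspan⟩ := coneDim_eq_one_ray hdimρ
  have hρτ : ρ ⊆ τ := face_subset hfaceρ
  have hρgood : GoodCone ρ := goodCone_of_face hτ hfaceρ
  have hdimτ : 1 ≤ coneDim τ := hdimρ ▸ coneDim_mono hρτ
  have hmul : ∀ x ∈ ρ, ∃ c : ℝ, x = c • u := by
    intro x hx
    have : x ∈ Submodule.span ℝ {u} := hspan ▸ Submodule.subset_span hx
    obtain ⟨c, rfl⟩ := Submodule.mem_span_singleton.mp this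
    exact ⟨c, rfl⟩
  refine ⟨u, hune, Set.Subset.antisymm ?_ ?_⟩
  swap
  · rintro x ⟨t, ht, rfl⟩
    exact hρgood.2.1 t ht u huρ
  intro x hx
  obtain ⟨c, rfl⟩ := hmul x hx
  rcases le_or_gt 0 c with hc | hc
  · exact ⟨c, hc, rfl⟩
  -- c < 0 leads to contradiction
  exfalso
  obtain ⟨L, hL, hξ⟩ := hfaceξ
  have hLu : 0 ≤ L u := hL u (hρτ huρ)
  have hLcu : 0 ≤ c * L u := by simpa using hL _ (hρτ hx)
  have hLu0 : L u = 0 := by nlinarith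
  have hρξ : ρ ⊆ ξ := by
    intro y hy
    obtain ⟨d, rfl⟩ := hmul y hy
    rw [hξ]
    exact ⟨hρτ hy, by simp [hLu0]⟩
  have hξgood : GoodCone ξ := goodCone_of_face hτ ⟨L, hL, hξ⟩
  have hτξ : τ ⊆ ξ := by
    rw [hsum]
    rintro v ⟨a, ha, b, hb, rfl⟩
    exact hξgood.2.2 a ha b (hρξ hb)
  have : coneDim τ ≤ coneDim ξ := coneDim_mono hτξ
  omega

lemma finrank_sup_span_singleton_le [FiniteDimensional ℝ V] (p : Submodule ℝ V) (u : V) :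
    Module.finrank ℝ (p ⊔ Submodule.span ℝ {u} : Submodule ℝ V) ≤ Module.finrank ℝ p + 1 := by
  have := Submodule.finrank_sup_add_finrank_inf_eq p (Submodule.span ℝ {u})
  have h1 : Module.finrank ℝ (Submodule.span ℝ {u} : Submodule ℝ V) ≤ 1 :=
    finrank_span_le_card _ |>.trans (by simp)
  omega

/-- Key lifting lemma: a free edge of the complementary facet of a free edge is free. -/
lemma lift_freeEdge [FiniteDimensional ℝ V] {τ ρ ξ ρ' : Set V}
    (hτ : GoodCone τ)
    (hρedge : IsEdge ρ τ)
    (hξface : IsFaceOf ξ τ) (hξdim : coneDim ξ = coneDim τ - 1)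
    (hedges : ∀ e, IsEdge e τ → e ≠ ρ → e ⊆ ξ) (hsum : τ = setAdd ξ ρ)
    (hρ' : IsFreeEdge ρ' ξ) (hρ'τ : IsFaceOf ρ' τ) : IsFreeEdge ρ' τ := by
  have hξgood : GoodCone ξ := goodCone_of_face hτ hξface
  have hξτ : ξ ⊆ τ := face_subset hξface
  have h0ξ : (0:V) ∈ ξ := hξgood.1
  have hτ1 : 1 ≤ coneDim τ := hρedge.2 ▸ coneDim_mono (face_subset hρedge.1)
  obtain ⟨u, hune, hρray⟩ := freeEdge_ray hτ ⟨hρedge, ξ, hξface, hξdim, hedges, hsum⟩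
  have hsum' : τ = setAdd ξ (Ray u) := hρray ▸ hsum
  have hunm : u ∉ Submodule.span ℝ ξ :=
    ray_notMem_span hsum' h0ξ (by omega)
  obtain ⟨⟨hρ'faceξ, hρ'dim⟩, ζ, hζface, hζdim, hedgesξ, hsumξ⟩ := hρ'
  have hζgood : GoodCone ζ := goodCone_of_face hξgood hζface
  have h0ζ : (0:V) ∈ ζ := hζgood.1
  have hζξ : ζ ⊆ ξ := face_subset hζface
  have hξ1 : 1 ≤ coneDim ξ := hρ'dim ▸ coneDim_mono (face_subset hρ'faceξ)
  obtain ⟨u', hu'ne, hρ'ray⟩ :=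
    freeEdge_ray hξgood ⟨⟨hρ'faceξ, hρ'dim⟩, ζ, hζface, hζdim, hedgesξ, hsumξ⟩
  have hsumξ' : ξ = setAdd ζ (Ray u') := hρ'ray ▸ hsumξ
  have hu'nmζ : u' ∉ Submodule.span ℝ ζ :=
    ray_notMem_span hsumξ' h0ζ (by omega)
  have hspanτ : Submodule.span ℝ τ = Submodule.span ℝ ξ ⊔ Submodule.span ℝ {u} := by
    rw [hsum', span_setAdd h0ξ (ray_good u).1, span_ray]
  have hspanξ : Submodule.span ℝ ξ = Submodule.span ℝ ζ ⊔ Submodule.span ℝ {u'} := by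
    rw [hsumξ', span_setAdd h0ζ (ray_good u').1, span_ray]
  set W : Submodule ℝ V := Submodule.span ℝ ζ ⊔ Submodule.span ℝ {u} with hW
  have hunζ : u ∉ Submodule.span ℝ ζ := fun h => hunm (Submodule.span_mono hζξ h)
  have hu'W : u' ∉ W := by
    intro hmem
    have hle : Submodule.span ℝ τ ≤ W := by
      rw [hspanτ, hspanξ]
      refine sup_le (sup_le le_sup_left ?_) le_sup_right
      rw [Submodule.span_le]
      rintro x hx
      rcases hx with rfl
      exact hmem
    have h1 : coneDim τ ≤ Module.finrank ℝ W := Submodule.finrank_mono hle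
    have h2 : Module.finrank ℝ W ≤ coneDim ζ + 1 := finrank_sup_span_singleton_le _ _
    omega
  obtain ⟨L, hLW, hLu'⟩ := exists_dual_of_nmem hu'W
  have hLζ : ∀ z ∈ ζ, L z = 0 := fun z hz =>
    hLW z (le_sup_left (α := Submodule ℝ V) (Submodule.subset_span hz))
  have hLu : L u = 0 := hLW u (le_sup_right (α := Submodule ℝ V) (Submodule.subset_span rfl))
  -- decomposition of τ
  have hdecomp : ∀ v ∈ τ, ∃ z ∈ ζ, ∃ c : ℝ, 0 ≤ c ∧ ∃ t : ℝ, 0 ≤ t ∧ v = z + c • u' + t • u := by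
    intro v hv
    rw [hsum'] at hv
    obtain ⟨a, ha, b, ⟨t, ht, rfl⟩, rfl⟩ := hv
    rw [hsumξ'] at ha
    obtain ⟨z, hz, b', ⟨c, hc, rfl⟩, rfl⟩ := ha
    exact ⟨z, hz, c, hc, t, ht, rfl⟩
  have hLval : ∀ (z : V) (c t : ℝ), z ∈ ζ → L (z + c • u' + t • u) = c := by
    intro z c t hz
    rw [map_add, map_add, map_smul, map_smul, hLζ z hz, hLu, hLu', smul_eq_mul,
      smul_eq_mul]
    ring
  have hLτ : ∀ v ∈ τ, 0 ≤ L v := by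
    intro v hv
    obtain ⟨z, hz, c, hc, t, ht, rfl⟩ := hdecomp v hv
    rw [hLval z c t hz]; exact hc
  set θ : Set V := setAdd ζ ρ with hθ
  have hθτ : θ ⊆ τ := by
    rintro x ⟨z, hz, b, hb, rfl⟩
    exact hτ.2.2 z (hξτ (hζξ hz)) b (face_subset hρedge.1 hb)
  have hθface : IsFaceOf θ τ := by
    refine ⟨L, hLτ, Set.Subset.antisymm ?_ ?_⟩
    · rintro x ⟨z, hz, b, hb, rfl⟩
      refine ⟨hθτ ⟨z, hz, b, hb, rfl⟩, ?_⟩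
      obtain ⟨t, ht, rfl⟩ := hρray ▸ hb
      have := hLval z 0 t hz
      simpa using this
    · rintro v ⟨hv, hLv⟩
      obtain ⟨z, hz, c, hc, t, ht, rfl⟩ := hdecomp v hv
      rw [hLval z c t hz] at hLv
      subst hLv
      exact ⟨z, hz, t • u, hρray ▸ ⟨t, ht, rfl⟩, by simp⟩
  have hθdim : coneDim θ = coneDim τ - 1 := by
    have : coneDim θ = coneDim ζ + 1 := by
      rw [hθ, hρray]
      exact coneDim_setAdd_ray h0ζ hune hunζ
    omega
  refine ⟨⟨hρ'τ, hρ'dim⟩, θ, hθface, hθdim, ?_, ?_⟩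
  · -- all other edges of τ lie in θ
    intro e he hne
    by_cases heρ : e = ρ
    · subst heρ
      intro x hx
      exact ⟨0, h0ζ, x, hx, (zero_add x).symm⟩
    · have heξ : e ⊆ ξ := hedges e he heρ
      have heedgeξ : IsEdge e ξ := ⟨face_of_face_subset he.1 heξ hξτ, he.2⟩
      have heζ : e ⊆ ζ := hedgesξ e heedgeξ hne
      intro x hx
      exact ⟨x, heζ hx, 0, (goodCone_of_face hτ hρedge.1).1, (add_zero x).symm⟩
  · -- τ = θ + ρ'
    apply Set.Subset.antisymm
    · intro v hv
      obtain ⟨z, hz, c, hc, t, ht, rfl⟩ := hdecomp v hv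
      refine ⟨z + t • u, ⟨z, hz, t • u, hρray ▸ ⟨t, ht, rfl⟩, rfl⟩,
        c • u', hρ'ray ▸ ⟨c, hc, rfl⟩, by abel⟩
    · rintro x ⟨a, ha, b, hb, rfl⟩
      exact hτ.2.2 a (hθτ ha) b (hξτ (face_subset hρ'faceξ hb)) 


lemma Fan.good {Φ : Fan V} {σ : Set V} (h : σ ∈ Φ.cones) : GoodCone σ :=
  goodCone_of_poly (Φ.poly σ h)

lemma Fan.face_of_subset {Φ : Fan V} {σ τ : Set V} (hσ : σ ∈ Φ.cones) (hτ : τ ∈ Φ.cones)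
    (h : σ ⊆ τ) : IsFaceOf σ τ := by
  have := Φ.inter_face τ hτ σ hσ
  rwa [Set.inter_eq_right.mpr h] at this

set_option maxHeartbeats 1000000 in
lemma main_aux [FiniteDimensional ℝ V] (Φ : Fan V) (σ : Set V)
    (hσΦ : σ ∈ Φ.cones) (hσdef : IsDeficient σ)
    (hnd : ∀ τ ∈ Φ.cones, σ ⊆ τ → τ ≠ σ → ∃ ρ, IsFreeEdge ρ τ) :
    ∀ n : ℕ, ∀ τ : Set V, τ ∈ Φ.cones → σ ⊆ τ → coneDim τ = n →
      ∃ (s : ℕ) (ρ : Fin s → Set V),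
        s = coneDim τ - coneDim σ ∧
        (∀ i, IsFreeEdge (ρ i) τ) ∧
        τ = {x | ∃ a ∈ σ, ∃ c : Fin s → V, (∀ i, c i ∈ ρ i) ∧ x = a + ∑ i, c i} := by
  intro n
  induction n using Nat.strong_induction_on with
  | _ n IH =>
  intro τ hτΦ hστ hdim
  by_cases hstd : τ = σ
  · subst hstd
    refine ⟨0, Fin.elim0, by omega, fun i => i.elim0, ?_⟩
    ext x
    simp only [Set.mem_setOf_eq, Finset.univ_eq_empty, Finset.sum_empty]
    constructor
    · intro hx
      exact ⟨x, hx, Fin.elim0, fun i => i.elim0, by simp⟩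
    · rintro ⟨a, ha, c, _, rfl⟩
      simpa using ha
  · -- τ strictly contains σ
    have hτgood : GoodCone τ := Fan.good hτΦ
    have hσgood : GoodCone σ := Fan.good hσΦ
    obtain ⟨ρ₁, hρ₁free⟩ := hnd τ hτΦ hστ hstd
    obtain ⟨hρ₁edge, ξ, hξface, hξdim, hedges, hsum⟩ := hρ₁free
    have hτ1 : 1 ≤ coneDim τ := hρ₁edge.2 ▸ coneDim_mono (face_subset hρ₁edge.1)
    obtain ⟨u, hune, hρ₁ray⟩ :=
      freeEdge_ray hτgood ⟨hρ₁edge, ξ, hξface, hξdim, hedges, hsum⟩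
    have hsum' : τ = setAdd ξ (Ray u) := hρ₁ray ▸ hsum
    have hξτ : ξ ⊆ τ := face_subset hξface
    have hξgood : GoodCone ξ := goodCone_of_face hτgood hξface
    have h0ξ : (0:V) ∈ ξ := hξgood.1
    have hunm : u ∉ Submodule.span ℝ ξ := ray_notMem_span hsum' h0ξ (by omega)
    obtain ⟨L, hLτ, hξeq⟩ := hξface
    have hLξ : ∀ v ∈ ξ, L v = 0 := fun v hv => (hξeq ▸ hv).2
    have huτ : u ∈ τ := face_subset hρ₁edge.1 (hρ₁ray ▸ ⟨1, zero_le_one, (one_smul ℝ u).symm⟩)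
    have huρ₁ : u ∈ ρ₁ := hρ₁ray ▸ ⟨1, zero_le_one, (one_smul ℝ u).symm⟩
    obtain ⟨M, hMτ, hσeq⟩ := Fan.face_of_subset hσΦ hτΦ hστ
    have hMσ : ∀ v ∈ σ, M v = 0 := fun v hv => (hσeq ▸ hv).2
    -- Claim : σ ⊆ ξ
    have hσξ : σ ⊆ ξ := by
      by_contra hc
      obtain ⟨x, hxσ, hxξ⟩ := not_subset.mp hc
      have hxτ : x ∈ τ := hστ hxσ
      have hLx : 0 < L x := by
        rcases (hLτ x hxτ).lt_or_eq with h | h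
        · exact h
        · exact absurd (hξeq ▸ ⟨hxτ, h.symm⟩) hxξ
      obtain ⟨a, ha, b, ⟨t, ht, rfl⟩, rfl⟩ := hsum' ▸ hxτ
      have hLa : L a = 0 := hLξ a ha
      have hLxval : L (a + t • u) = t * L u := by
        rw [map_add, map_smul, hLa, smul_eq_mul]; ring
      have hLu0 : 0 < t * L u := by rw [← hLxval]; exact hLx
      have ht' : 0 < t := by nlinarith [hLτ u huτ]
      have hLu : 0 < L u := by nlinarith
      have hMx : M (a + t • u) = 0 := hMσ _ hxσ
      have hMa : 0 ≤ M a := hMτ a (hξτ ha)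
      have hMu : 0 ≤ M u := hMτ u huτ
      have hMau : M a + t * M u = 0 := by
        rw [← hMx, map_add, map_smul, smul_eq_mul]
      have hMa0 : M a = 0 := by nlinarith
      have hMu0 : M u = 0 := by nlinarith
      have haσ : a ∈ σ := hσeq ▸ ⟨hξτ ha, hMa0⟩
      have huσ : u ∈ σ := hσeq ▸ ⟨huτ, hMu0⟩
      have hρ₁σ : ρ₁ ⊆ σ := by
        rw [hρ₁ray]
        rintro y ⟨t', ht', rfl⟩
        exact hσgood.2.1 t' ht' u huσ
      -- Now ρ₁ is a free edge of σ, contradicting deficiency of σ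
      apply hσdef
      have hσsum : σ = setAdd {v ∈ σ | L v = 0} (Ray u) := by
        apply Set.Subset.antisymm
        · intro v hvσ
          obtain ⟨a', ha', b', ⟨t'', ht'', rfl⟩, rfl⟩ := hsum' ▸ (hστ hvσ)
          have hMv : M a' + t'' * M u = 0 := by
            have := hMσ _ hvσ
            rw [map_add, map_smul, smul_eq_mul] at this
            linarith
          have hMa' : M a' = 0 := by
            have := hMτ a' (hξτ ha')
            nlinarith
          exact ⟨a', ⟨hσeq ▸ ⟨hξτ ha', hMa'⟩, hLξ a' ha'⟩, t'' • u, ⟨t'', ht'', rfl⟩, rfl⟩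
        · rintro y ⟨z, hz, b', ⟨t'', ht'', rfl⟩, rfl⟩
          exact hσgood.2.2 z hz.1 _ (hσgood.2.1 t'' ht'' u huσ)
      have h0ξ' : (0:V) ∈ {v ∈ σ | L v = 0} := ⟨hσgood.1, map_zero L⟩
      have hunmξ' : u ∉ Submodule.span ℝ {v ∈ σ | L v = 0} := by
        intro h
        apply hunm
        refine Submodule.span_mono ?_ h
        intro w hw
        exact hξeq ▸ ⟨hστ hw.1, hw.2⟩
      have hdimσ : coneDim σ = coneDim {v ∈ σ | L v = 0} + 1 := by
        have h := coneDim_setAdd_ray h0ξ' hune hunmξ'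
        rwa [← hσsum] at h
      refine ⟨ρ₁, ⟨face_of_face_subset hρ₁edge.1 hρ₁σ hστ, hρ₁edge.2⟩,
        {v ∈ σ | L v = 0}, ⟨L, fun v hv => hLτ v (hστ hv), rfl⟩, by omega, ?_, by rw [← hρ₁ray] at hσsum; exact hσsum⟩
      -- other edges of σ lie in the facet
      intro e he hne
      intro w hw
      have hwσ : w ∈ σ := face_subset he.1 hw
      refine ⟨hwσ, ?_⟩
      by_contra hLw
      have hLw : 0 < L w := (hLτ w (hστ hwσ)).lt_of_ne (Ne.symm hLw)
      obtain ⟨a', ha', b', ⟨s', hs', rfl⟩, rfl⟩ := hsum' ▸ (hστ hwσ)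
      have hs'pos : 0 < s' := by
        have : L (a' + s' • u) = s' * L u := by
          rw [map_add, map_smul, hLξ a' ha', smul_eq_mul]; ring
        nlinarith [hLτ u huτ]
      have hMa' : M a' = 0 := by
        have h1 : M a' + s' * M u = 0 := by
          have := hMσ _ hwσ
          rw [map_add, map_smul, smul_eq_mul] at this
          linarith
        have := hMτ a' (hξτ ha')
        nlinarith
      have ha'σ : a' ∈ σ := hσeq ▸ ⟨hξτ ha', hMa'⟩
      obtain ⟨N', hN'σ, heeq⟩ := he.1
      have hN'w : N' a' + s' * N' u = 0 := by
        have : N' (a' + s' • u) = 0 := (heeq ▸ hw).2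
        rw [map_add, map_smul, smul_eq_mul] at this
        linarith
      have hN'u : N' u = 0 := by
        have h1 := hN'σ a' ha'σ
        have h2 := hN'σ u huσ
        nlinarith
      have hue : u ∈ e := heeq ▸ ⟨huσ, hN'u⟩
      -- e = ρ₁, contradiction
      apply hne
      have hspan : Submodule.span ℝ {u} = Submodule.span ℝ e := by
        apply Submodule.eq_of_le_of_finrank_le
          (Submodule.span_mono (by simpa using hue))
        rw [show Module.finrank ℝ (Submodule.span ℝ e) = 1 from he.2, finrank_span_singleton hune]
      apply Set.Subset.antisymm
      · intro y hy
        have : y ∈ Submodule.span ℝ {u} := hspan ▸ Submodule.subset_span hy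
        obtain ⟨c, rfl⟩ := Submodule.mem_span_singleton.mp this
        have hLy : 0 ≤ c * L u := by
          have := hLτ _ (hστ (face_subset he.1 hy))
          rwa [map_smul, smul_eq_mul] at this
        have hLu : 0 < L u := by nlinarith
        have hc : 0 ≤ c := by nlinarith
        exact hρ₁ray ▸ ⟨c, hc, rfl⟩
      · rw [hρ₁ray]
        rintro y ⟨t', ht', rfl⟩
        exact (goodCone_of_face hσgood ⟨N', hN'σ, heeq⟩).2.1 t' ht' u hue
    -- main recursion
    have hξΦ : ξ ∈ Φ.cones := Φ.face_mem τ hτΦ ξ ⟨L, hLτ, hξeq⟩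
    have hξdim' : coneDim ξ = n - 1 := by omega
    obtain ⟨s', ρ', hs', hfree', hD'⟩ :=
      IH (n-1) (by omega) ξ hξΦ hσξ hξdim'
    have hlift : ∀ i, IsFreeEdge (ρ' i) τ := by
      intro i
      have hρ'Φ : ρ' i ∈ Φ.cones := Φ.face_mem ξ hξΦ _ (hfree' i).1.1
      exact lift_freeEdge hτgood hρ₁edge ⟨L, hLτ, hξeq⟩ hξdim hedges hsum (hfree' i)
        (Fan.face_of_subset hρ'Φ hτΦ ((face_subset (hfree' i).1.1).trans hξτ))
    have hσξdim : coneDim σ ≤ coneDim ξ := coneDim_mono hσξ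
    refine ⟨s' + 1, Fin.snoc ρ' ρ₁, by omega, ?_, ?_⟩
    · intro i
      refine Fin.lastCases ?_ ?_ i
      · rw [Fin.snoc_last]
        exact ⟨hρ₁edge, ξ, ⟨L, hLτ, hξeq⟩, hξdim, hedges, hsum⟩
      · intro j
        rw [Fin.snoc_castSucc]
        exact hlift j
    · ext x
      simp only [Set.mem_setOf_eq]
      constructor
      · intro hx
        obtain ⟨b, hb, r, hr, rfl⟩ := hsum ▸ hx
        obtain ⟨a, ha, c, hc, rfl⟩ := hD' ▸ hb
        refine ⟨a, ha, Fin.snoc c r, ?_, ?_⟩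
        · intro i
          refine Fin.lastCases ?_ ?_ i
          · rw [Fin.snoc_last, Fin.snoc_last]; exact hr
          · intro j
            rw [Fin.snoc_castSucc, Fin.snoc_castSucc]
            exact hc j
        · rw [Fin.sum_univ_castSucc]
          simp only [Fin.snoc_castSucc, Fin.snoc_last]
          abel
      · rintro ⟨a, ha, c, hc, rfl⟩
        rw [hsum]
        refine ⟨a + ∑ i : Fin s', c i.castSucc, ?_, c (Fin.last s'), ?_, ?_⟩
        · rw [hD']
          exact ⟨a, ha, fun i => c i.castSucc, fun i => by
            have := hc i.castSucc
            rwa [Fin.snoc_castSucc] at this, rfl⟩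
        · have := hc (Fin.last s')
          rwa [Fin.snoc_last] at this
        · rw [Fin.sum_univ_castSucc]
          abel

/-- Let `Φ` be a complete fan and `σ` a cone of maximal dimension in
the singular subfan `Φˢ`. Then every cone `τ ∈ St(σ)` has the form
`τ = σ + ρ₁ + ... + ρ_s` with `s = dim τ - dim σ`, where each `ρᵢ` is a free edge
of `τ`. -/
theorem star_of_maximal_singular_cone [FiniteDimensional ℝ V]
    (Φ : Fan V) (hΦ : Φ.IsComplete) (σ : Set V)
    (hσ : σ ∈ Φ.singular) (hmax : ∀ τ ∈ Φ.singular, coneDim τ ≤ coneDim σ) :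
    ∀ τ ∈ Φ.star σ,
      ∃ (s : ℕ) (ρ : Fin s → Set V),
        s = coneDim τ - coneDim σ ∧
        (∀ i, IsFreeEdge (ρ i) τ) ∧
        τ = {x | ∃ a ∈ σ, ∃ c : Fin s → V, (∀ i, c i ∈ ρ i) ∧ x = a + ∑ i, c i} := by
  obtain ⟨hσΦ, δ, hδΦ, hδdef, hσδ⟩ := hσ
  have hδsing : δ ∈ Φ.singular := ⟨hδΦ, δ, hδΦ, hδdef, face_refl δ⟩
  have hσeqδ : σ = δ :=
    face_eq_of_coneDim_eq hσδ
      (le_antisymm (coneDim_mono (face_subset hσδ)) (hmax δ hδsing))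
  have hσdef : IsDeficient σ := hσeqδ ▸ hδdef
  have hnd : ∀ τ ∈ Φ.cones, σ ⊆ τ → τ ≠ σ → ∃ ρ, IsFreeEdge ρ τ := by
    intro τ hτΦ hστ hne
    by_contra hc
    have hτsing : τ ∈ Φ.singular := ⟨hτΦ, τ, hτΦ, hc, face_refl τ⟩
    have h1 : coneDim τ ≤ coneDim σ := hmax τ hτsing
    have h2 : coneDim σ ≤ coneDim τ := coneDim_mono hστ
    exact hne (face_eq_of_coneDim_eq (Fan.face_of_subset hσΦ hτΦ hστ)
      (le_antisymm h2 h1)).symm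
  rintro τ ⟨hτΦ, hστ⟩
  exact main_aux Φ σ hσΦ hσdef hnd (coneDim τ) τ hτΦ hστ rfl
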